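/- arXiv:1905.00495 — 2 statements merged into one kernel-verified Lean document; each statement's English description precedes it below -/
import Mathlib

section
/- For the double integrator Forward primitive with ū = √(d u*): any solution of ẋ₁ = x₂, ẋ₂ = -(2u*/ū)x₂ + u* starting with x₁(0) ∈ [0, d] and x₂(0) ∈ (0, ū] has strictly increasing first coordinate, and there exists a finite time T ≥ 0 with x₁(T) = d and x₂(T) ∈ (0, ū]. -/
/-- For the Forward primitive, trajectories starting in the invariant region
with positive velocity have strictly increasing position and reach the right
face `x₁ = d` in finite time with velocity in `(0, ū]`. -/
theorem forward_reaches_right_face (d u : ℝ) (hd : 0 < d) (hu : 0 < u)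
    (ub : ℝ) (hub : ub = Real.sqrt (d * u))
    (x₁ x₂ : ℝ → ℝ)
    (hode1 : ∀ t, HasDerivAt x₁ (x₂ t) t)
    (hode2 : ∀ t, HasDerivAt x₂ (-(2 * u / ub) * x₂ t + u) t)
    (hx1 : x₁ 0 ∈ Set.Icc 0 d) (hx2 : x₂ 0 ∈ Set.Ioc 0 ub) :
    StrictMonoOn x₁ (Set.Ici 0) ∧
      ∃ T ≥ 0, x₁ T = d ∧ x₂ T ∈ Set.Ioc 0 ub := by
  have hub0 : 0 < ub := by
    rw [hub]; exact Real.sqrt_pos.mpr (mul_pos hd hu)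
  set k : ℝ := 2 * u / ub with hk_def
  have hk : 0 < k := div_pos (by linarith) hub0
  set c : ℝ := ub / 2 with hc_def
  have hc : 0 < c := by positivity
  -- explicit formula for x₂
  set g : ℝ → ℝ := fun t => (x₂ t - c) * Real.exp (k * t) with hg_def
  have hg' : ∀ t, HasDerivAt g 0 t := by
    intro t
    have h1 : HasDerivAt (fun t => x₂ t - c) (-(2 * u / ub) * x₂ t + u) t :=
      (hode2 t).sub_const c
    have h2 : HasDerivAt (fun t => Real.exp (k * t)) (k * Real.exp (k * t)) t := by
      have := ((hasDerivAt_id t).const_mul k).exp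
      simpa [mul_comm] using this
    have h3 := h1.mul h2
    have heq : (-(2 * u / ub) * x₂ t + u) * Real.exp (k * t)
        + (x₂ t - c) * (k * Real.exp (k * t)) = 0 := by
      have : k * c = u := by
        rw [hk_def, hc_def, div_mul_div_comm, div_eq_iff (by positivity)]; ring
      have : (-(k) * x₂ t + u + (x₂ t - c) * k) = 0 := by nlinarith
      calc (-(2 * u / ub) * x₂ t + u) * Real.exp (k * t)
            + (x₂ t - c) * (k * Real.exp (k * t))
          = (-(k) * x₂ t + u + (x₂ t - c) * k) * Real.exp (k * t) := by ring
        _ = 0 := by rw [this]; ring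
    rw [heq] at h3
    exact h3
  have hgconst : ∀ t, g t = g 0 :=
    fun t => is_const_of_deriv_eq_zero (fun s => (hg' s).differentiableAt)
      (fun s => (hg' s).deriv) t 0
  have hform : ∀ t, x₂ t = c + (x₂ 0 - c) * Real.exp (-(k * t)) := by
    intro t
    have h := hgconst t
    simp only [hg_def] at h
    have hx : x₂ t - c = (x₂ 0 - c) * Real.exp (-(k * t)) := by
      have hne : Real.exp (k * t) ≠ 0 := Real.exp_ne_zero _
      have e : Real.exp (-(k * t)) * Real.exp (k * t) = 1 := by rw [← Real.exp_add]; simp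
      simp only [mul_zero, Real.exp_zero, mul_one] at h
      linear_combination (Real.exp (-(k * t))) * h - (x₂ t - c) * e
    linarith [hx]
  set m : ℝ := min c (x₂ 0) with hm_def
  have hm : 0 < m := lt_min hc hx2.1
  -- bounds on x₂ for t ≥ 0
  have hbounds : ∀ t : ℝ, 0 ≤ t → m ≤ x₂ t ∧ x₂ t ≤ ub := by
    intro t ht
    have he1 : 0 < Real.exp (-(k * t)) := Real.exp_pos _
    have he2 : Real.exp (-(k * t)) ≤ 1 := by
      apply Real.exp_le_one_iff.mpr
      nlinarith
    have h := hform t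
    have hm1 : m ≤ c := min_le_left _ _
    have hm2 : m ≤ x₂ 0 := min_le_right _ _
    constructor
    · nlinarith [hx2.1, hx2.2]
    · have hc2 : c ≤ ub := by simp [hc_def]; linarith
      nlinarith [hx2.1, hx2.2]
  have hpos : ∀ t : ℝ, 0 ≤ t → 0 < x₂ t := fun t ht => lt_of_lt_of_le hm (hbounds t ht).1
  -- strict monotonicity of x₁
  have hmono : StrictMonoOn x₁ (Set.Ici 0) := by
    apply strictMonoOn_of_deriv_pos (convex_Ici 0)
      (fun t _ => (hode1 t).continuousAt.continuousWithinAt)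
    intro t ht
    rw [interior_Ici] at ht
    rw [(hode1 t).deriv]
    exact hpos t (le_of_lt ht)
  refine ⟨hmono, ?_⟩
  -- x₁ grows at least linearly with slope m
  have hlin : ∀ t : ℝ, 0 ≤ t → x₁ 0 + m * t ≤ x₁ t := by
    intro t ht
    have hmono2 : MonotoneOn (fun s => x₁ s - m * s) (Set.Ici 0) := by
      apply monotoneOn_of_deriv_nonneg (convex_Ici 0)
      · have hcx : Continuous x₁ := continuous_iff_continuousAt.mpr fun s => (hode1 s).continuousAt
        exact ((hcx.sub (continuous_const.mul continuous_id)).continuousOn)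
      · intro s hs
        exact (((hode1 s).sub ((hasDerivAt_id s).const_mul m)).differentiableAt).differentiableWithinAt
      · intro s hs
        rw [interior_Ici] at hs
        have hds : HasDerivAt (fun s => x₁ s - m * s) (x₂ s - m) s := by
          have h5 := (hode1 s).sub ((hasDerivAt_id' s).const_mul m)
          rwa [mul_one] at h5
        rw [hds.deriv]
        have := (hbounds s (le_of_lt hs)).1
        linarith
    have := hmono2 (Set.self_mem_Ici) (Set.mem_Ici.mpr ht) ht
    simp only at this
    linarith
  -- reach d by IVT
  set T0 : ℝ := d / m with hT0_def
  have hT0 : 0 ≤ T0 := le_of_lt (div_pos hd hm)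
  have hreach : d ≤ x₁ T0 := by
    have := hlin T0 hT0
    have hmT0 : m * T0 = d := by
      rw [hT0_def, mul_comm, div_mul_cancel₀ d hm.ne']
    nlinarith [hx1.1]
  have hcont : ContinuousOn x₁ (Set.Icc 0 T0) :=
    fun t _ => (hode1 t).continuousAt.continuousWithinAt
  have hivt := intermediate_value_Icc hT0 hcont
  have hdmem : d ∈ Set.Icc (x₁ 0) (x₁ T0) := ⟨hx1.2, hreach⟩
  obtain ⟨T, hTmem, hTd⟩ := hivt hdmem
  exact ⟨T, hTmem.1, hTd, hpos T hTmem.1, (hbounds T hTmem.1).2⟩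
end

section
/- For the double integrator Backward controller u(x) = -(2u*/ū)x₂ - u* with ū = √(d u*): any solution of ẋ₁ = x₂, ẋ₂ = u(x) with x₁(0) ∈ [0,d] and x₂(0) ∈ [-ū, 0) satisfies x₂(t) ∈ [-ū, 0) for all t ≥ 0, and there exists finite T with x₁(T) = 0. -/
/-- For the Backward primitive, the velocity stays in `[-ū, 0)` and the
position reaches `0` in finite time. -/
theorem backward_reaches_left_face (d u : ℝ) (hd : 0 < d) (hu : 0 < u)
    (ub : ℝ) (hub : ub = Real.sqrt (d * u))
    (x₁ x₂ : ℝ → ℝ)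
    (hode1 : ∀ t, HasDerivAt x₁ (x₂ t) t)
    (hode2 : ∀ t, HasDerivAt x₂ (-(2 * u / ub) * x₂ t - u) t)
    (hx1 : x₁ 0 ∈ Set.Icc 0 d) (hx2 : x₂ 0 ∈ Set.Ico (-ub) 0) :
    (∀ t ≥ 0, x₂ t ∈ Set.Ico (-ub) 0) ∧ ∃ T, x₁ T = 0 := by
  have hubpos : 0 < ub := by
    rw [hub]; exact Real.sqrt_pos.mpr (mul_pos hd hu)
  set k : ℝ := 2 * u / ub with hkdef
  have hkpos : 0 < k := by rw [hkdef]; positivity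
  have hkub : k * ub = 2 * u := by rw [hkdef]; exact div_mul_cancel₀ _ (ne_of_gt hubpos)
  clear_value k
  set c : ℝ := x₂ 0 + ub / 2 with hcdef
  clear_value c
  -- integrating factor: (x₂ t + ub/2) * exp(k t) is constant
  have hg : ∀ t, (x₂ t + ub / 2) * Real.exp (k * t) = c := by
    have hder : ∀ t, HasDerivAt (fun t => (x₂ t + ub / 2) * Real.exp (k * t)) 0 t := by
      intro t
      have h1 : HasDerivAt (fun t => x₂ t + ub / 2) (-k * x₂ t - u) t :=
        (hode2 t).add_const (ub / 2)
      have h2 : HasDerivAt (fun s : ℝ => Real.exp (k * s)) (k * Real.exp (k * t)) t := by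
        have := (Real.hasDerivAt_exp (k * t)).comp t ((hasDerivAt_id t).const_mul k)
        simpa [Function.comp_def, mul_one, mul_comm (Real.exp (k * t)) k] using this
      have h3 := h1.mul h2
      exact h3.congr_deriv (by linear_combination (Real.exp (k * t) / 2) * hkub)
    intro t
    have := is_const_of_deriv_eq_zero
      (f := fun t => (x₂ t + ub / 2) * Real.exp (k * t))
      (fun s => (hder s).differentiableAt) (fun s => (hder s).deriv) t 0
    simpa [← hcdef] using this
  have hclb : -(ub / 2) ≤ c := by have := hx2.1; rw [hcdef]; linarith
  have hcub : c < ub / 2 := by have := hx2.2; rw [hcdef]; linarith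
  -- velocity bounds for t ≥ 0
  have hE1 : ∀ t : ℝ, 0 ≤ t → 1 ≤ Real.exp (k * t) := by
    intro t ht; exact Real.one_le_exp (by positivity)
  have hx2mem : ∀ t ≥ 0, x₂ t ∈ Set.Ico (-ub) 0 := by
    intro t ht
    have hE := hE1 t ht
    have hEpos : 0 < Real.exp (k * t) := Real.exp_pos _
    have hgt := hg t
    have hylb : -(ub / 2) ≤ x₂ t + ub / 2 := by
      rcases le_or_gt 0 (x₂ t + ub / 2) with h | h
      · linarith
      · nlinarith [mul_nonneg (sub_nonneg.mpr hE) (by linarith : (0:ℝ) ≤ -(x₂ t + ub / 2))]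
    have hyub : x₂ t + ub / 2 < ub / 2 := by
      rcases le_or_gt (x₂ t + ub / 2) 0 with h | h
      · linarith
      · nlinarith [mul_nonneg (sub_nonneg.mpr hE) h.le]
    constructor
    · linarith
    · linarith
  -- bound x₂ t ≤ m < 0 for t ≥ 0
  set m : ℝ := max (x₂ 0) (-(ub / 2)) with hmdef
  have hm1 : x₂ 0 ≤ m := le_max_left _ _
  have hm2 : -(ub / 2) ≤ m := le_max_right _ _
  have hmneg : m < 0 := by rw [hmdef]; exact max_lt hx2.2 (by linarith)
  clear_value m
  have hx2le : ∀ t ≥ 0, x₂ t ≤ m := by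
    intro t ht
    have hE := hE1 t ht
    have hEpos : 0 < Real.exp (k * t) := Real.exp_pos _
    have hgt := hg t
    rcases le_or_gt c 0 with h | h
    · have hy : x₂ t + ub / 2 ≤ 0 := by nlinarith
      linarith
    · have hy : x₂ t + ub / 2 ≤ c := by
        nlinarith [mul_nonneg (sub_nonneg.mpr hE) (by nlinarith : (0:ℝ) ≤ x₂ t + ub / 2)]
      rw [hcdef] at hy
      linarith
  -- position decreases; reaches 0 by IVT
  set T₀ : ℝ := (d + 1) / (-m) with hT₀def
  have hT₀pos : 0 < T₀ := by
    rw [hT₀def]; exact div_pos (by linarith) (by linarith)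
  have hmT₀ : m * T₀ = -(d + 1) := by
    have hm0 : m ≠ 0 := ne_of_lt hmneg
    rw [hT₀def]
    field_simp
  clear_value T₀
  have hh : ∀ t, HasDerivAt (fun s => x₁ s - m * s) (x₂ t - m) t := by
    intro t
    exact ((hode1 t).sub ((hasDerivAt_id' t).const_mul m)).congr_deriv (by ring)
  have hanti : AntitoneOn (fun s => x₁ s - m * s) (Set.Ici 0) := by
    apply antitoneOn_of_deriv_nonpos (convex_Ici 0)
    · exact fun t _ => ((hh t).differentiableAt).continuousAt.continuousWithinAt
    · exact fun t _ => ((hh t).differentiableAt).differentiableWithinAt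
    · intro t ht
      rw [interior_Ici] at ht
      rw [(hh t).deriv]
      have := hx2le t (le_of_lt ht)
      linarith
  have hx1T₀ : x₁ T₀ ≤ -1 := by
    have := hanti (Set.self_mem_Ici) (Set.mem_Ici.mpr hT₀pos.le) hT₀pos.le
    simp only at this
    have h1 := hx1.2
    nlinarith
  have hcont : ContinuousOn x₁ (Set.Icc 0 T₀) :=
    fun t _ => ((hode1 t).differentiableAt).continuousAt.continuousWithinAt
  have hsub := intermediate_value_Icc' hT₀pos.le hcont
  have h0mem : (0 : ℝ) ∈ Set.Icc (x₁ T₀) (x₁ 0) := ⟨by linarith, hx1.1⟩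
  obtain ⟨T, _, hT⟩ := hsub h0mem
  exact ⟨hx2mem, T, hT⟩
end
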